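/- Let ⊢ be an abstract consequence relation on a set A. Define X ⊢' Y iff X ⊢ a for all a ∈ Y. Then ⊢' is a deductive relation on the dually integral Abelian pomonoid ⟨𝒫(A), ⊆, ∪, ∅⟩. -/
import Mathlib

/-- The multi-conclusion lift of an abstract consequence relation on a set `A` is a
deductive relation on the dually integral Abelian pomonoid `⟨𝒫(A), ⊆, ∪, ∅⟩`. -/
theorem acr_lift_is_deductive_relation {A : Type*} (vd : Set A → A → Prop)
    (hrefl : ∀ (X : Set A) (a : A), a ∈ X → vd X a)
    (hmono : ∀ (X Y : Set A) (a : A), vd X a → X ⊆ Y → vd Y a)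
    (hcut : ∀ (X Y : Set A) (a : A), vd Y a → (∀ b ∈ Y, vd X b) → vd X a) :
    (∀ X Y : Set A, X ⊆ Y → (∀ a ∈ X, vd Y a)) ∧
    (∀ X Y Z : Set A, (∀ a ∈ Y, vd X a) → (∀ a ∈ Z, vd Y a) → (∀ a ∈ Z, vd X a)) ∧
    (∀ X Y Z : Set A, (∀ a ∈ Y, vd X a) → (∀ a ∈ Y ∪ Z, vd (X ∪ Z) a)) := by
  refine ⟨fun X Y hXY a ha => hrefl Y a (hXY ha),
    fun X Y Z h1 h2 a ha => hcut X Y a (h2 a ha) h1,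
    fun X Y Z h a ha => ?_⟩
  rcases ha with ha | ha
  · exact hmono X (X ∪ Z) a (h a ha) Set.subset_union_left
  · exact hrefl _ a (Or.inr ha)
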